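/- arXiv:1812.01175 — 4 statements merged into one kernel-verified Lean document; each statement's English description precedes it below -/
import Mathlib

section
/- Let $W$ be exponential with rate $\mu = 1/\lambda_1 + 1/\lambda_2 > 0$, and let $\rho > 0$, $0 < \phi_2 < 1$. Then $E[\log_2(1+\rho W) - \log_2(1+\rho\phi_2 W)] = \frac{1}{\ln 2}\left(-e^{\mu/\rho}\operatorname{Ei}(-\mu/\rho) + e^{\mu/(\phi_2\rho)}\operatorname{Ei}(-\mu/(\phi_2\rho))\right)$. -/
open MeasureTheory ProbabilityTheory Real

/-- Exponential integral: `Ei x = -∫_{-x}^∞ e^{-t}/t dt`. -/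
noncomputable def Ei (x : ℝ) : ℝ := -∫ t in Set.Ioi (-x), Real.exp (-t) / t

open Set



lemma integral_expMeasure_eq (μ : ℝ) (hμ : 0 < μ) (g : ℝ → ℝ) :
    ∫ x, g x ∂(expMeasure μ) = ∫ x in Ioi (0:ℝ), g x * (μ * Real.exp (-(μ * x))) := by
  have hmeas : Measurable fun x => (gammaPDFReal 1 μ x).toNNReal :=
    (measurable_gammaPDFReal 1 μ).real_toNNReal
  have h1 : ∫ x, g x ∂(expMeasure μ)
      = ∫ x, (gammaPDFReal 1 μ x).toNNReal • g x := by
    rw [show expMeasure μ = volume.withDensity (fun x => ((gammaPDFReal 1 μ x).toNNReal : ENNReal))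
        from rfl]
    exact integral_withDensity_eq_integral_smul hmeas g
  rw [h1]
  have h2 : (fun x => (gammaPDFReal 1 μ x).toNNReal • g x)
      = Set.indicator (Ici (0:ℝ)) (fun x => g x * (μ * Real.exp (-(μ * x)))) := by
    funext x
    by_cases hx : (0:ℝ) ≤ x
    · have hpdf : gammaPDFReal 1 μ x = μ * Real.exp (-(μ * x)) := by
        simp [gammaPDFReal, hx, Real.Gamma_one]
      simp [Set.indicator_of_mem (mem_Ici.mpr hx), hpdf, NNReal.smul_def,
        Real.coe_toNNReal _ (by positivity)]
      rw [sup_eq_left.mpr (by positivity : (0:ℝ) ≤ μ * Real.exp (-(μ * x)))]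
      ring
    · simp [Set.indicator_of_notMem (fun h => hx (mem_Ici.mp h)), gammaPDFReal, hx]
  rw [h2, integral_indicator measurableSet_Ici, integral_Ici_eq_integral_Ioi]


lemma log_exp_bound {μ a x : ℝ} (hμ : 0 < μ) (ha : 0 < a) (hx : 0 ≤ x) :
    Real.log (1 + a * x) * Real.exp (-(μ * x)) ≤ 2 * a / μ * Real.exp (-(μ / 2 * x)) := by
  have h1 : Real.log (1 + a * x) ≤ a * x := by
    have := Real.log_le_sub_one_of_pos (show 0 < 1 + a * x by positivity)
    linarith
  have h2 : μ / 2 * x ≤ Real.exp (μ / 2 * x) :=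
    le_trans (by linarith) (Real.add_one_le_exp _)
  have h3 : a * x ≤ 2 * a / μ * Real.exp (μ / 2 * x) := by
    have := mul_le_mul_of_nonneg_left h2 (show (0:ℝ) ≤ 2 * a / μ by positivity)
    calc a * x = 2 * a / μ * (μ / 2 * x) := by field_simp
      _ ≤ _ := this
  calc Real.log (1 + a * x) * Real.exp (-(μ * x))
      ≤ (a * x) * Real.exp (-(μ * x)) :=
        mul_le_mul_of_nonneg_right h1 (Real.exp_pos _).le
    _ ≤ (2 * a / μ * Real.exp (μ / 2 * x)) * Real.exp (-(μ * x)) :=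
        mul_le_mul_of_nonneg_right h3 (Real.exp_pos _).le
    _ = 2 * a / μ * Real.exp (-(μ / 2 * x)) := by
        rw [mul_assoc, ← Real.exp_add]
        congr 2
        ring

lemma log_nonneg' {a x : ℝ} (ha : 0 < a) (hx : 0 ≤ x) : 0 ≤ Real.log (1 + a * x) :=
  Real.log_nonneg (by nlinarith)

lemma integrableOn_log_mul_exp {μ a : ℝ} (hμ : 0 < μ) (ha : 0 < a) :
    IntegrableOn (fun x => Real.log (1 + a * x) * Real.exp (-(μ * x))) (Ioi (0:ℝ)) := by
  refine Integrable.mono ((exp_neg_integrableOn_Ioi 0 (show (0:ℝ) < μ / 2 by positivity)).const_mul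
    (2 * a / μ)) ?_ ?_
  · exact ((Real.measurable_log.comp (by fun_prop)).mul (by fun_prop)).aestronglyMeasurable
  · filter_upwards [ae_restrict_mem measurableSet_Ioi] with x hx
    have hx0 : (0:ℝ) ≤ x := le_of_lt hx
    rw [Real.norm_eq_abs, Real.norm_eq_abs,
      abs_of_nonneg (mul_nonneg (log_nonneg' ha hx0) (Real.exp_pos _).le),
      abs_of_nonneg (by positivity), show -(μ / 2) * x = -(μ / 2 * x) by ring]
    exact log_exp_bound hμ ha hx0

lemma integrableOn_frac_mul_exp {μ a : ℝ} (hμ : 0 < μ) (ha : 0 < a) :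
    IntegrableOn (fun x => a / (1 + a * x) * Real.exp (-(μ * x))) (Ioi (0:ℝ)) := by
  refine Integrable.mono ((exp_neg_integrableOn_Ioi 0 hμ).const_mul a) ?_ ?_
  · exact ((measurable_const.div (by fun_prop)).mul (by fun_prop)).aestronglyMeasurable
  · filter_upwards [ae_restrict_mem measurableSet_Ioi] with x hx
    have hx0 : (0:ℝ) ≤ x := le_of_lt hx
    have h1 : (0:ℝ) < 1 + a * x := by nlinarith
    rw [Real.norm_eq_abs, Real.norm_eq_abs, abs_of_nonneg (by positivity),
      abs_of_nonneg (by positivity)]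
    have : a / (1 + a * x) ≤ a := by
      rw [div_le_iff₀ h1]
      nlinarith [mul_nonneg (mul_nonneg ha.le ha.le) hx0]
    rw [show -μ * x = -(μ * x) by ring]
    exact mul_le_mul_of_nonneg_right this (Real.exp_pos _).le

lemma stepA {μ a : ℝ} (hμ : 0 < μ) (ha : 0 < a) :
    ∫ x in Ioi (0:ℝ), Real.log (1 + a * x) * (μ * Real.exp (-(μ * x)))
      = ∫ x in Ioi (0:ℝ), a / (1 + a * x) * Real.exp (-(μ * x)) := by
  set F : ℝ → ℝ := fun x => -(Real.log (1 + a * x) * Real.exp (-(μ * x))) with hF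
  have hpos : ∀ x : ℝ, 0 ≤ x → (0:ℝ) < 1 + a * x := fun x hx => by nlinarith
  have hderiv : ∀ x ∈ Ioi (0:ℝ), HasDerivAt F
      (μ * (Real.log (1 + a * x) * Real.exp (-(μ * x)))
        - a / (1 + a * x) * Real.exp (-(μ * x))) x := by
    intro x hx
    have hlog : HasDerivAt (fun y => Real.log (1 + a * y)) (a / (1 + a * x)) x := by
      have h0 : HasDerivAt (fun y : ℝ => 1 + a * y) a x := by
        simpa using ((hasDerivAt_id x).const_mul a).const_add 1
      simpa using h0.log (hpos x (le_of_lt hx)).ne'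
    have hexp : HasDerivAt (fun y => Real.exp (-(μ * y))) (-μ * Real.exp (-(μ * x))) x := by
      have h0 : HasDerivAt (fun y : ℝ => -(μ * y)) (-μ) x := by
        simpa using (hasDerivAt_id x).const_mul (-μ)
      have := h0.exp
      convert this using 1
      ring
    have := (hlog.mul hexp).neg
    convert this using 1
    · rfl
    · rfl
    · rfl
    · ring
  have hcont : ContinuousWithinAt F (Ici (0:ℝ)) 0 := by
    apply ContinuousAt.continuousWithinAt
    have h1 : ContinuousAt (fun y : ℝ => Real.log (1 + a * y)) 0 := by
      apply (Real.continuousAt_log (by norm_num)).comp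
      fun_prop
    exact (h1.mul (by fun_prop)).neg
  have h1int : IntegrableOn (fun x => μ * (Real.log (1 + a * x) * Real.exp (-(μ * x))))
      (Ioi (0:ℝ)) := (integrableOn_log_mul_exp hμ ha).const_mul μ
  have h2int : IntegrableOn (fun x => a / (1 + a * x) * Real.exp (-(μ * x)))
      (Ioi (0:ℝ)) := integrableOn_frac_mul_exp hμ ha
  have hint : IntegrableOn (fun x =>
      μ * (Real.log (1 + a * x) * Real.exp (-(μ * x)))
        - a / (1 + a * x) * Real.exp (-(μ * x))) (Ioi (0:ℝ)) := h1int.sub h2int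
  have htend : Filter.Tendsto F Filter.atTop (nhds 0) := by
    rw [show (0:ℝ) = -0 by norm_num]
    apply Filter.Tendsto.neg
    apply squeeze_zero' (g := fun x => 2 * a / μ * Real.exp (-(μ / 2 * x)))
    · filter_upwards [Filter.eventually_ge_atTop (0:ℝ)] with x hx
      exact mul_nonneg (log_nonneg' ha hx) (Real.exp_pos _).le
    · filter_upwards [Filter.eventually_ge_atTop (0:ℝ)] with x hx
      exact log_exp_bound hμ ha hx
    · have h1 : Filter.Tendsto (fun x : ℝ => -(μ / 2 * x)) Filter.atTop Filter.atBot := by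
        apply Filter.tendsto_neg_atTop_atBot.comp
        exact Filter.Tendsto.const_mul_atTop (by positivity) Filter.tendsto_id
      have := (Real.tendsto_exp_atBot.comp h1).const_mul (2 * a / μ)
      simpa using this
  have key : (∫ x in Ioi (0:ℝ),
      (μ * (Real.log (1 + a * x) * Real.exp (-(μ * x)))
        - a / (1 + a * x) * Real.exp (-(μ * x)))) = 0 - F 0 :=
    integral_Ioi_of_hasDerivAt_of_tendsto hcont hderiv hint htend
  have hF0 : F 0 = 0 := by simp [hF]
  rw [hF0, sub_zero, integral_sub h1int h2int] at key
  have hcongr : ∫ x in Ioi (0:ℝ), Real.log (1 + a * x) * (μ * Real.exp (-(μ * x)))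
      = ∫ x in Ioi (0:ℝ), μ * (Real.log (1 + a * x) * Real.exp (-(μ * x))) := by
    refine integral_congr_ae (Filter.Eventually.of_forall fun x => ?_)
    ring
  rw [hcongr]
  exact sub_eq_zero.mp key


lemma integral_comp_add_right_Ioi (g : ℝ → ℝ) (a d : ℝ) :
    (∫ x in Ioi a, g (x + d)) = ∫ x in Ioi (a + d), g x := by
  have h : ∀ c : ℝ, MeasurableSet (Ioi c) := fun c => measurableSet_Ioi
  rw [← integral_indicator (h a), ← integral_indicator (h (a + d)),
    ← integral_add_right_eq_self (Set.indicator (Ioi (a + d)) g) d]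
  congr 1
  funext x
  by_cases hx : x ∈ Ioi a
  · rw [Set.indicator_of_mem hx, Set.indicator_of_mem
      (by simpa [mem_Ioi, add_lt_add_iff_right] using hx)]
  · rw [Set.indicator_of_notMem hx, Set.indicator_of_notMem
      (by simpa [mem_Ioi, add_lt_add_iff_right] using hx)]

lemma stepB {μ a : ℝ} (hμ : 0 < μ) (ha : 0 < a) :
    ∫ x in Ioi (0:ℝ), a / (1 + a * x) * Real.exp (-(μ * x))
      = -(Real.exp (μ / a) * Ei (-(μ / a))) := by
  have hEi : Ei (-(μ / a)) = -∫ t in Ioi (μ / a), Real.exp (-t) / t := by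
    rw [Ei, neg_neg]
  calc ∫ x in Ioi (0:ℝ), a / (1 + a * x) * Real.exp (-(μ * x))
      = ∫ x in Ioi (0:ℝ),
          (fun y => μ * Real.exp (μ / a) * (Real.exp (-(y + μ / a)) / (y + μ / a))) (μ * x) := by
        refine setIntegral_congr_fun measurableSet_Ioi fun x hx => ?_
        have hx0 : (0:ℝ) < x := hx
        have h1 : (0:ℝ) < 1 + a * x := by nlinarith
        have h2 : μ * x + μ / a = μ / a * (1 + a * x) := by field_simp; ring
        have e : Real.exp (μ / a) * Real.exp (-(μ * x + μ / a)) = Real.exp (-(μ * x)) := by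
          rw [← Real.exp_add]; congr 1; ring
        simp only []
        refine Eq.symm ?_
        calc μ * Real.exp (μ / a) * (Real.exp (-(μ * x + μ / a)) / (μ * x + μ / a))
            = μ * (Real.exp (μ / a) * Real.exp (-(μ * x + μ / a))) / (μ * x + μ / a) := by ring
          _ = μ * Real.exp (-(μ * x)) / (μ / a * (1 + a * x)) := by rw [e, h2]
          _ = a / (1 + a * x) * Real.exp (-(μ * x)) := by
              rw [div_eq_iff (by positivity : μ / a * (1 + a * x) ≠ 0)]
              field_simp
    _ = μ⁻¹ • ∫ y in Ioi (μ * 0),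
          (fun y => μ * Real.exp (μ / a) * (Real.exp (-(y + μ / a)) / (y + μ / a))) y :=
        integral_comp_mul_left_Ioi
          (fun y => μ * Real.exp (μ / a) * (Real.exp (-(y + μ / a)) / (y + μ / a))) 0 hμ
    _ = μ⁻¹ • ∫ t in Ioi ((0:ℝ) + μ / a),
          μ * Real.exp (μ / a) * (Real.exp (-t) / t) := by
        rw [mul_zero]
        exact congrArg (fun z => μ⁻¹ • z)
          (integral_comp_add_right_Ioi
            (fun y => μ * Real.exp (μ / a) * (Real.exp (-y) / y)) 0 (μ / a))
    _ = -(Real.exp (μ / a) * Ei (-(μ / a))) := by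
        rw [zero_add, integral_const_mul, hEi, smul_eq_mul]
        field_simp

lemma key_integral {μ a : ℝ} (hμ : 0 < μ) (ha : 0 < a) :
    ∫ x in Ioi (0:ℝ), Real.log (1 + a * x) * (μ * Real.exp (-(μ * x)))
      = -(Real.exp (μ / a) * Ei (-(μ / a))) := (stepA hμ ha).trans (stepB hμ ha)

lemma integrableOn_log_mul_exp' {μ a : ℝ} (hμ : 0 < μ) (ha : 0 < a) :
    IntegrableOn (fun x => Real.log (1 + a * x) * (μ * Real.exp (-(μ * x)))) (Ioi (0:ℝ)) := by
  refine ((integrableOn_log_mul_exp hμ ha).const_mul μ).congr ?_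
  exact Filter.Eventually.of_forall fun x => by ring

/-- ergodic capacity integral for symbol s₁:
`E[log₂(1+ρW) - log₂(1+ρφ₂W)]` for `W` exponential with rate `μ = 1/lam₁ + 1/lam₂`. -/
theorem ergodic_capacity_s1
    (lam₁ lam₂ ρ φ₂ : ℝ) (hlam₁ : 0 < lam₁) (hlam₂ : 0 < lam₂)
    (hρ : 0 < ρ) (hφ₂ : 0 < φ₂) (hφ₂1 : φ₂ < 1) :
    ∫ w, (Real.logb 2 (1 + ρ * w) - Real.logb 2 (1 + ρ * φ₂ * w))
        ∂(expMeasure (1 / lam₁ + 1 / lam₂))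
      = (1 / Real.log 2) *
        (-(Real.exp ((1 / lam₁ + 1 / lam₂) / ρ) * Ei (-((1 / lam₁ + 1 / lam₂) / ρ)))
          + Real.exp ((1 / lam₁ + 1 / lam₂) / (φ₂ * ρ))
            * Ei (-((1 / lam₁ + 1 / lam₂) / (φ₂ * ρ)))) := by
  rw [mul_comm φ₂ ρ]
  set μ : ℝ := 1 / lam₁ + 1 / lam₂ with hμdef
  have hμ : 0 < μ := by positivity
  have hρφ : 0 < ρ * φ₂ := by positivity
  rw [integral_expMeasure_eq μ hμ]
  rw [setIntegral_congr_fun measurableSet_Ioi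
    (show ∀ w ∈ Ioi (0:ℝ),
        (Real.logb 2 (1 + ρ * w) - Real.logb 2 (1 + ρ * φ₂ * w)) * (μ * Real.exp (-(μ * w)))
      = Real.log (1 + ρ * w) * (μ * Real.exp (-(μ * w))) / Real.log 2
        - Real.log (1 + ρ * φ₂ * w) * (μ * Real.exp (-(μ * w))) / Real.log 2
      from fun w _ => by simp only [Real.logb]; ring)]
  rw [integral_sub ((integrableOn_log_mul_exp' hμ hρ).div_const (Real.log 2))
    ((integrableOn_log_mul_exp' hμ hρφ).div_const (Real.log 2)),
    integral_div, integral_div, key_integral hμ hρ, key_integral hμ hρφ]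
  ring
end

section
/- Let $H_1, H_3$ be independent exponential random variables with means $\lambda_1, \lambda_3 > 0$, and let $\vartheta_2, \vartheta_3, \rho > 0$. Then the random variable $V = \frac{\vartheta_2 \rho H_3}{\vartheta_3 \rho H_1 + 1}$ has CDF $F_V(v) = 1 - \frac{\vartheta_2\lambda_3}{\vartheta_2\lambda_3 + \vartheta_3\lambda_1 v} e^{-v/(\vartheta_2\rho\lambda_3)}$ for $v \geq 0$. -/
open MeasureTheory ProbabilityTheory Real

/-- CDF of the uplink-NOMA SINR `V = ϑ₂ρH₃ / (ϑ₃ρH₁ + 1)`. -/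
theorem sinr_s2_cdf
    {Ω : Type*} [MeasurableSpace Ω] (μ : Measure Ω) [IsProbabilityMeasure μ]
    (H₁ H₃ : Ω → ℝ) (hH₁ : Measurable H₁) (hH₃ : Measurable H₃)
    (hind : IndepFun H₁ H₃ μ)
    (lam₁ lam₃ ϑ₂ ϑ₃ ρ : ℝ) (hlam₁ : 0 < lam₁) (hlam₃ : 0 < lam₃)
    (hϑ₂ : 0 < ϑ₂) (hϑ₃ : 0 < ϑ₃) (hρ : 0 < ρ)
    (hH₁law : μ.map H₁ = expMeasure (1 / lam₁))
    (hH₃law : μ.map H₃ = expMeasure (1 / lam₃)) :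
    ∀ v : ℝ, 0 ≤ v →
      μ {ω | ϑ₂ * ρ * H₃ ω / (ϑ₃ * ρ * H₁ ω + 1) ≤ v}
        = ENNReal.ofReal
            (1 - ϑ₂ * lam₃ / (ϑ₂ * lam₃ + ϑ₃ * lam₁ * v)
              * Real.exp (-(v / (ϑ₂ * ρ * lam₃)))) := by
  intro v hv
  have ha : (0:ℝ) < 1 / lam₁ := by positivity
  have hb : (0:ℝ) < 1 / lam₃ := by positivity
  set a : ℝ := 1 / lam₁ with ha_def
  set b : ℝ := 1 / lam₃ with hb_def
  haveI : IsProbabilityMeasure (expMeasure a) := isProbabilityMeasure_expMeasure ha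
  haveI : IsProbabilityMeasure (expMeasure b) := isProbabilityMeasure_expMeasure hb
  set c : ℝ := b * v * ϑ₃ / ϑ₂ with hc_def
  set d : ℝ := b * v / (ϑ₂ * ρ) with hd_def
  have hc : 0 ≤ c := by positivity
  have hd : 0 ≤ d := by positivity
  have hac : 0 < a + c := by positivity
  -- measurability of the event in the product space
  have hfm : Measurable fun p : ℝ × ℝ => ϑ₂ * ρ * p.2 / (ϑ₃ * ρ * p.1 + 1) :=
    (measurable_const.mul measurable_snd).div
      ((measurable_const.mul measurable_fst).add measurable_const)
  have hs : MeasurableSet {p : ℝ × ℝ | ϑ₂ * ρ * p.2 / (ϑ₃ * ρ * p.1 + 1) ≤ v} :=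
    measurableSet_le hfm measurable_const
  -- joint law is the product of exponentials
  have hmap : μ.map (fun ω => (H₁ ω, H₃ ω)) = (expMeasure a).prod (expMeasure b) := by
    rw [← hH₁law, ← hH₃law]
    exact (indepFun_iff_map_prod_eq_prod_map_map hH₁.aemeasurable hH₃.aemeasurable).mp hind
  have h1 : μ {ω | ϑ₂ * ρ * H₃ ω / (ϑ₃ * ρ * H₁ ω + 1) ≤ v}
      = ((expMeasure a).prod (expMeasure b))
          {p : ℝ × ℝ | ϑ₂ * ρ * p.2 / (ϑ₃ * ρ * p.1 + 1) ≤ v} := by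
    rw [← hmap, Measure.map_apply (hH₁.prodMk hH₃) hs]
    rfl
  -- the inner measure, for x ≥ 0
  have hinner : ∀ x : ℝ, 0 ≤ x →
      expMeasure b (Prod.mk x ⁻¹' {p : ℝ × ℝ | ϑ₂ * ρ * p.2 / (ϑ₃ * ρ * p.1 + 1) ≤ v})
        = ENNReal.ofReal (1 - Real.exp (-(c * x + d))) := by
    intro x hx
    have hD : 0 < ϑ₃ * ρ * x + 1 := by positivity
    have hset : Prod.mk x ⁻¹' {p : ℝ × ℝ | ϑ₂ * ρ * p.2 / (ϑ₃ * ρ * p.1 + 1) ≤ v}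
        = Set.Iic (v * (ϑ₃ * ρ * x + 1) / (ϑ₂ * ρ)) := by
      ext y
      simp only [Set.mem_preimage, Set.mem_setOf_eq, Set.mem_Iic]
      rw [div_le_iff₀ hD, le_div_iff₀ (by positivity : (0:ℝ) < ϑ₂ * ρ)]
      constructor <;> intro h <;> nlinarith [h]
    have ht : 0 ≤ v * (ϑ₃ * ρ * x + 1) / (ϑ₂ * ρ) := by positivity
    have hwd : expMeasure b = volume.withDensity (exponentialPDF b) := rfl
    have harg : b * (v * (ϑ₃ * ρ * x + 1) / (ϑ₂ * ρ)) = c * x + d := by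
      rw [hc_def, hd_def, hb_def]
      field_simp
    rw [hset, hwd, withDensity_apply _ measurableSet_Iic,
      lintegral_exponentialPDF_eq_antiDeriv hb, if_pos ht, harg]
  rw [h1, Measure.prod_apply hs]
  have hg : Measurable fun x : ℝ =>
      expMeasure b (Prod.mk x ⁻¹' {p : ℝ × ℝ | ϑ₂ * ρ * p.2 / (ϑ₃ * ρ * p.1 + 1) ≤ v}) :=
    measurable_measure_prodMk_left hs
  have hwd : expMeasure a = volume.withDensity (exponentialPDF a) := rfl
  have hmexp : Measurable (exponentialPDF a) :=
    (measurable_exponentialPDFReal a).ennreal_ofReal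
  rw [hwd, lintegral_withDensity_eq_lintegral_mul _ hmexp hg]
  -- split the integral at 0
  rw [← lintegral_add_compl _ (measurableSet_Ici (a := (0:ℝ)))]
  have hneg : ∫⁻ x in (Set.Ici (0:ℝ))ᶜ,
      (exponentialPDF a * fun x => expMeasure b
        (Prod.mk x ⁻¹' {p : ℝ × ℝ | ϑ₂ * ρ * p.2 / (ϑ₃ * ρ * p.1 + 1) ≤ v})) x = 0 := by
    rw [Set.compl_Ici]
    have hz : ∀ x ∈ Set.Iio (0:ℝ),
        (exponentialPDF a * fun x => expMeasure b
          (Prod.mk x ⁻¹' {p : ℝ × ℝ | ϑ₂ * ρ * p.2 / (ϑ₃ * ρ * p.1 + 1) ≤ v})) x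
        = (fun _ : ℝ => (0 : ENNReal)) x := fun x hx => by
      simp [Pi.mul_apply, exponentialPDF_of_neg (Set.mem_Iio.mp hx)]
    rw [setLIntegral_congr_fun_ae measurableSet_Iio (Filter.Eventually.of_forall hz),
      lintegral_zero]
  rw [hneg, add_zero]
  -- general fact: the exponential pdf integrates to 1 on [0, ∞)
  have hA : ∀ r : ℝ, 0 < r →
      ∫⁻ x in Set.Ici (0:ℝ), ENNReal.ofReal (r * Real.exp (-(r * x))) = 1 := by
    intro r hr
    have h0 : ∫⁻ x in Set.Ici (0:ℝ), exponentialPDF r x = 1 := by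
      have htot := lintegral_exponentialPDF_eq_one hr
      rw [← lintegral_add_compl (exponentialPDF r) (measurableSet_Ici (a := (0:ℝ))),
        Set.compl_Ici, lintegral_exponentialPDF_of_nonpos le_rfl, add_zero] at htot
      exact htot
    rw [← h0]
    exact setLIntegral_congr_fun_ae measurableSet_Ici
      (Filter.Eventually.of_forall fun x hx => (exponentialPDF_of_nonneg hx).symm)
  -- rewrite integrand on [0, ∞) as a difference
  have hptwise : ∀ x ∈ Set.Ici (0:ℝ),
      (exponentialPDF a * fun x => expMeasure b
        (Prod.mk x ⁻¹' {p : ℝ × ℝ | ϑ₂ * ρ * p.2 / (ϑ₃ * ρ * p.1 + 1) ≤ v})) x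
      = ENNReal.ofReal (a * Real.exp (-(a * x)))
        - ENNReal.ofReal (a * Real.exp (-(a * x)) * Real.exp (-(c * x + d))) := by
    intro x hx
    have hx' : (0:ℝ) ≤ x := hx
    rw [Pi.mul_apply, hinner x hx', exponentialPDF_of_nonneg hx',
      ← ENNReal.ofReal_mul (by positivity), mul_sub, mul_one,
      ENNReal.ofReal_sub _ (by positivity)]
  rw [setLIntegral_congr_fun_ae measurableSet_Ici (Filter.Eventually.of_forall hptwise)]
  have hmB : Measurable fun x : ℝ =>
      ENNReal.ofReal (a * Real.exp (-(a * x)) * Real.exp (-(c * x + d))) := by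
    apply Measurable.ennreal_ofReal
    exact ((measurable_const.mul ((measurable_const.mul measurable_id).neg.exp)).mul
      ((((measurable_const.mul measurable_id).add measurable_const)).neg.exp))
  -- value of the integral of the second term
  have hkey : ∀ x : ℝ, a * Real.exp (-(a * x)) * Real.exp (-(c * x + d))
      = (Real.exp (-d) * (a / (a + c))) * ((a + c) * Real.exp (-((a + c) * x))) := by
    intro x
    have h1 : Real.exp (-(a * x)) * Real.exp (-(c * x + d))
        = Real.exp (-d) * Real.exp (-((a + c) * x)) := by
      rw [← Real.exp_add, ← Real.exp_add]
      congr 1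
      ring
    calc a * Real.exp (-(a * x)) * Real.exp (-(c * x + d))
        = a * (Real.exp (-(a * x)) * Real.exp (-(c * x + d))) := by ring
      _ = a * (Real.exp (-d) * Real.exp (-((a + c) * x))) := by rw [h1]
      _ = (Real.exp (-d) * (a / (a + c))) * ((a + c) * Real.exp (-((a + c) * x))) := by
          field_simp
  have hB : ∫⁻ x in Set.Ici (0:ℝ),
      ENNReal.ofReal (a * Real.exp (-(a * x)) * Real.exp (-(c * x + d)))
      = ENNReal.ofReal (Real.exp (-d) * (a / (a + c))) := by
    have : ∀ x : ℝ, ENNReal.ofReal (a * Real.exp (-(a * x)) * Real.exp (-(c * x + d)))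
        = ENNReal.ofReal (Real.exp (-d) * (a / (a + c)))
          * ENNReal.ofReal ((a + c) * Real.exp (-((a + c) * x))) := by
      intro x
      rw [← ENNReal.ofReal_mul (by positivity), hkey x]
    simp_rw [this]
    rw [lintegral_const_mul _ (by
      apply Measurable.ennreal_ofReal
      exact measurable_const.mul ((measurable_const.mul measurable_id).neg.exp)),
      hA (a + c) hac, mul_one]
  have hle : (fun x : ℝ => ENNReal.ofReal (a * Real.exp (-(a * x)) * Real.exp (-(c * x + d))))
      ≤ᵐ[volume.restrict (Set.Ici (0:ℝ))]
      fun x : ℝ => ENNReal.ofReal (a * Real.exp (-(a * x))) := by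
    filter_upwards [ae_restrict_mem measurableSet_Ici] with x hx
    apply ENNReal.ofReal_le_ofReal
    have h1 : Real.exp (-(c * x + d)) ≤ 1 := by
      rw [Real.exp_le_one_iff]
      simp only [neg_nonpos]
      have : (0:ℝ) ≤ x := hx
      positivity
    exact mul_le_of_le_one_right (by positivity) h1
  rw [lintegral_sub hmB (by rw [hB]; exact ENNReal.ofReal_ne_top) hle, hA a ha, hB]
  -- final arithmetic
  have hq : Real.exp (-d) * (a / (a + c))
      = ϑ₂ * lam₃ / (ϑ₂ * lam₃ + ϑ₃ * lam₁ * v) * Real.exp (-(v / (ϑ₂ * ρ * lam₃))) := by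
    have hd' : d = v / (ϑ₂ * ρ * lam₃) := by
      rw [hd_def, hb_def, one_div, inv_mul_eq_div, div_div]
      congr 1
      ring
    have haf : a / (a + c) = ϑ₂ * lam₃ / (ϑ₂ * lam₃ + ϑ₃ * lam₁ * v) := by
      rw [div_eq_div_iff hac.ne' (by positivity)]
      rw [ha_def, hc_def, hb_def]
      field_simp
    rw [hd', haf]
    ring
  rw [hq, ← ENNReal.ofReal_one, ← ENNReal.ofReal_sub _ (by positivity)]
end

section
/- Let $H_1$ be exponential with mean $\lambda_1 > 0$ and $\bar{H}_3$ exponential with mean $\kappa_2\lambda_3 > 0$, independent, and let $\vartheta_2, \vartheta_3, \rho > 0$. Then $Y = \frac{\vartheta_3\rho H_1}{\vartheta_2\rho \bar{H}_3 + 1}$ has complementary CDF $P(Y > y) = \frac{\vartheta_3\lambda_1}{\vartheta_3\lambda_1 + \vartheta_2\kappa_2\lambda_3 y} e^{-y/(\vartheta_3\rho\lambda_1)}$ for $y \geq 0$. -/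
open MeasureTheory ProbabilityTheory Real Set

lemma expMeasure_Ioi_aux {r c : ℝ} (hr : 0 < r) (hc : 0 ≤ c) :
    expMeasure r (Set.Ioi c) = ENNReal.ofReal (Real.exp (-(r * c))) := by
  haveI := isProbabilityMeasure_expMeasure hr
  have hIic : expMeasure r (Set.Iic c) = ENNReal.ofReal (1 - Real.exp (-(r * c))) := by
    rw [expMeasure, gammaMeasure, withDensity_apply _ measurableSet_Iic]
    have h := lintegral_exponentialPDF_eq_antiDeriv hr c
    rw [if_pos hc] at h
    exact h
  have h1 : Real.exp (-(r * c)) ≤ 1 := by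
    rw [Real.exp_le_one_iff]
    nlinarith
  have h2 : (0:ℝ) < Real.exp (-(r * c)) := Real.exp_pos _
  rw [show Set.Ioi c = (Set.Iic c)ᶜ from Set.compl_Iic.symm,
    measure_compl measurableSet_Iic (measure_ne_top _ _), measure_univ, hIic,
    ← ENNReal.ofReal_one, ← ENNReal.ofReal_sub 1 (by linarith)]
  congr 1
  ring

/-- complementary CDF of the SINR of s₃ under imperfect SIC. -/
theorem sinr_s3_ccdf
    {Ω : Type*} [MeasurableSpace Ω] (μ : Measure Ω) [IsProbabilityMeasure μ]
    (H₁ H₃' : Ω → ℝ) (hH₁ : Measurable H₁) (hH₃' : Measurable H₃')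
    (hind : IndepFun H₁ H₃' μ)
    (lam₁ lam₃ κ₂ ϑ₂ ϑ₃ ρ : ℝ) (hlam₁ : 0 < lam₁) (hκlam₃ : 0 < κ₂ * lam₃)
    (hϑ₂ : 0 < ϑ₂) (hϑ₃ : 0 < ϑ₃) (hρ : 0 < ρ)
    (hH₁law : μ.map H₁ = expMeasure (1 / lam₁))
    (hH₃law : μ.map H₃' = expMeasure (1 / (κ₂ * lam₃))) :
    ∀ y : ℝ, 0 ≤ y →
      μ {ω | y < ϑ₃ * ρ * H₁ ω / (ϑ₂ * ρ * H₃' ω + 1)}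
        = ENNReal.ofReal
            (ϑ₃ * lam₁ / (ϑ₃ * lam₁ + ϑ₂ * κ₂ * lam₃ * y)
              * Real.exp (-(y / (ϑ₃ * ρ * lam₁)))) := by
  intro y hy
  set r₁ : ℝ := 1 / lam₁ with hr₁def
  set r₃ : ℝ := 1 / (κ₂ * lam₃) with hr₃def
  have hr₁ : 0 < r₁ := by positivity
  have hr₃ : 0 < r₃ := by positivity
  haveI i1 : IsProbabilityMeasure (expMeasure r₁) := isProbabilityMeasure_expMeasure hr₁
  haveI i3 : IsProbabilityMeasure (expMeasure r₃) := isProbabilityMeasure_expMeasure hr₃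
  -- the set in the product space
  set T : Set (ℝ × ℝ) := {p : ℝ × ℝ | y < ϑ₃ * ρ * p.2 / (ϑ₂ * ρ * p.1 + 1)} with hTdef
  have hTmeas : MeasurableSet T := by
    apply measurableSet_lt measurable_const
    exact (measurable_const.mul measurable_snd).div
      ((measurable_const.mul measurable_fst).add measurable_const)
  have hmap : μ.map (fun ω => (H₃' ω, H₁ ω)) = (expMeasure r₃).prod (expMeasure r₁) := by
    rw [(indepFun_iff_map_prod_eq_prod_map_map hH₃'.aemeasurable hH₁.aemeasurable).mp hind.symm,
      hH₃law, hH₁law]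
  have hset : {ω | y < ϑ₃ * ρ * H₁ ω / (ϑ₂ * ρ * H₃' ω + 1)}
      = (fun ω => (H₃' ω, H₁ ω)) ⁻¹' T := rfl
  rw [hset, ← Measure.map_apply (hH₃'.prodMk hH₁) hTmeas, hmap,
    Measure.prod_apply hTmeas]
  -- constants
  set A : ℝ := r₃ + r₁ * y * ϑ₂ / ϑ₃ with hAdef
  set B : ℝ := r₁ * y / (ϑ₃ * ρ) with hBdef
  have hA : 0 < A := by positivity
  have hB : 0 ≤ B := by positivity
  set g : ℝ → ℝ := fun b => r₃ * Real.exp (-B) * Real.exp (-(A * b)) with hgdef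
  -- compute the inner measure a.e. and rewrite as an indicator
  have hae : ∀ᵐ b ∂(volume : Measure ℝ),
      exponentialPDF r₃ b * expMeasure r₁ (Prod.mk b ⁻¹' T)
        = Set.indicator (Set.Ioi 0) (fun b => ENNReal.ofReal (g b)) b := by
    filter_upwards [compl_mem_ae_iff.mpr (volume_singleton (a := (0:ℝ)))] with b hb
    simp only [Set.mem_compl_iff, Set.mem_singleton_iff] at hb
    rcases lt_or_gt_of_ne hb with hneg | hpos
    · rw [Set.indicator_of_notMem (by simp only [Set.mem_Ioi, not_lt]; exact hneg.le), exponentialPDF_of_neg hneg,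
        zero_mul]
    · rw [Set.indicator_of_mem (Set.mem_Ioi.mpr hpos)]
      have hden : (0:ℝ) < ϑ₂ * ρ * b + 1 := by positivity
      have hslice : Prod.mk b ⁻¹' T = Set.Ioi (y * (ϑ₂ * ρ * b + 1) / (ϑ₃ * ρ)) := by
        ext a
        simp only [hTdef, Set.mem_preimage, Set.mem_setOf_eq, Set.mem_Ioi]
        rw [lt_div_iff₀ hden, div_lt_iff₀ (by positivity : (0:ℝ) < ϑ₃ * ρ)]
        constructor <;> intro h <;> nlinarith
      have hc : 0 ≤ y * (ϑ₂ * ρ * b + 1) / (ϑ₃ * ρ) := by positivity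
      rw [hslice, expMeasure_Ioi_aux hr₁ hc, exponentialPDF_of_nonneg hpos.le,
        ← ENNReal.ofReal_mul (by positivity)]
      congr 1
      have harg : -(r₃ * b) + -(r₁ * (y * (ϑ₂ * ρ * b + 1) / (ϑ₃ * ρ))) = -B + -(A * b) := by
        rw [hBdef, hAdef]
        field_simp
        ring
      calc r₃ * Real.exp (-(r₃ * b)) * Real.exp (-(r₁ * (y * (ϑ₂ * ρ * b + 1) / (ϑ₃ * ρ))))
          = r₃ * Real.exp (-(r₃ * b) + -(r₁ * (y * (ϑ₂ * ρ * b + 1) / (ϑ₃ * ρ)))) := by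
            rw [mul_assoc, ← Real.exp_add]
        _ = g b := by
            rw [hgdef]
            simp only []
            rw [harg, Real.exp_add, ← mul_assoc]
  have hpdfmeas : Measurable (exponentialPDF r₃) :=
    (measurable_exponentialPDFReal r₃).ennreal_ofReal
  have hFmeas : Measurable fun b => expMeasure r₁ (Prod.mk b ⁻¹' T) :=
    measurable_measure_prodMk_left hTmeas
  rw [show expMeasure r₃ = volume.withDensity (exponentialPDF r₃) from rfl,
    lintegral_withDensity_eq_lintegral_mul _ hpdfmeas hFmeas]
  simp only [Pi.mul_apply]
  rw [lintegral_congr_ae hae, lintegral_indicator measurableSet_Ioi _]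
  -- evaluate the lintegral as a real integral
  have hint : IntegrableOn g (Set.Ioi 0) volume := by
    have := (exp_neg_integrableOn_Ioi 0 hA).const_mul (r₃ * Real.exp (-B))
    simpa [hgdef, neg_mul, IntegrableOn] using this
  have hnn : 0 ≤ᵐ[volume.restrict (Set.Ioi 0)] g := by
    filter_upwards with b
    positivity
  rw [← ofReal_integral_eq_lintegral_ofReal hint hnn]
  have hval : ∫ b in Set.Ioi (0:ℝ), g b = r₃ * Real.exp (-B) * A⁻¹ := by
    rw [hgdef]
    rw [MeasureTheory.integral_const_mul]
    have h2 : ∫ b in Set.Ioi (0:ℝ), Real.exp (-(A * b)) = A⁻¹ := by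
      have := integral_comp_mul_left_Ioi (fun x => Real.exp (-x)) 0 hA
      simp only [mul_zero, integral_exp_neg_Ioi, neg_zero, Real.exp_zero,
        smul_eq_mul, mul_one] at this
      rw [this]
    rw [h2]
  rw [hval]
  congr 1
  have hBeq : -B = -(y / (ϑ₃ * ρ * lam₁)) := by
    rw [hBdef, hr₁def]
    field_simp
  rw [hBeq]
  have hden2 : (0:ℝ) < ϑ₃ * lam₁ + ϑ₂ * κ₂ * lam₃ * y := by
    nlinarith [mul_nonneg (mul_nonneg hϑ₂.le hκlam₃.le) hy, mul_pos hϑ₃ hlam₁]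
  rw [mul_comm (r₃ * Real.exp (-(y / (ϑ₃ * ρ * lam₁)))) A⁻¹, ← mul_assoc]
  congr 1
  rw [hAdef, hr₁def, hr₃def]
  have hκ0 : κ₂ ≠ 0 := by rintro rfl; simp at hκlam₃
  have hl0 : lam₃ ≠ 0 := by rintro rfl; simp at hκlam₃
  field_simp
end

section
/- Define $P(\rho) = 1 - \frac{A}{A + BR}e^{-R/(C\rho)}$ with constants $A, B, C, R > 0$. Then $\lim_{\rho\to\infty} P(\rho) = \frac{BR}{A+BR} > 0$ and consequently $\lim_{\rho\to\infty} -\frac{\ln P(\rho)}{\ln \rho} = 0$, i.e., the diversity order under imperfect SIC is zero. -/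
open Filter Real

/-- under imperfect SIC the outage floors at `BR/(A+BR) > 0`,
so the diversity order is zero. -/
theorem diversity_order_zero_imperfect
    (A B C R : ℝ) (hA : 0 < A) (hB : 0 < B) (hC : 0 < C) (hR : 0 < R) :
    Tendsto (fun ρ : ℝ => 1 - A / (A + B * R) * Real.exp (-(R / (C * ρ))))
        atTop (nhds (B * R / (A + B * R)))
    ∧ 0 < B * R / (A + B * R)
    ∧ Tendsto
        (fun ρ : ℝ =>
          -(Real.log (1 - A / (A + B * R) * Real.exp (-(R / (C * ρ))))
              / Real.log ρ))
        atTop (nhds 0) := by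
  have hden : 0 < A + B * R := by positivity
  have hL : 0 < B * R / (A + B * R) := by positivity
  have hin : Tendsto (fun ρ : ℝ => R / (C * ρ)) atTop (nhds 0) := by
    have : (fun ρ : ℝ => R / (C * ρ)) = fun ρ : ℝ => (R / C) / ρ := by
      funext ρ; field_simp
    rw [this]
    exact tendsto_const_nhds.div_atTop tendsto_id
  have hexp : Tendsto (fun ρ : ℝ => Real.exp (-(R / (C * ρ)))) atTop (nhds 1) := by
    have h0 : Tendsto (fun ρ : ℝ => -(R / (C * ρ))) atTop (nhds 0) := by
      simpa using hin.neg
    simpa [Function.comp_def] using (Real.continuous_exp.tendsto 0).comp h0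
  have h1 : Tendsto (fun ρ : ℝ => 1 - A / (A + B * R) * Real.exp (-(R / (C * ρ))))
      atTop (nhds (B * R / (A + B * R))) := by
    have h2 : Tendsto (fun ρ : ℝ => 1 - A / (A + B * R) * Real.exp (-(R / (C * ρ))))
        atTop (nhds (1 - A / (A + B * R) * 1)) :=
      (tendsto_const_nhds (x := (1:ℝ))).sub (tendsto_const_nhds.mul hexp)
    have heq : 1 - A / (A + B * R) * 1 = B * R / (A + B * R) := by
      field_simp
      ring
    rwa [heq] at h2
  refine ⟨h1, hL, ?_⟩
  have hlog : Tendsto (fun ρ : ℝ =>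
      Real.log (1 - A / (A + B * R) * Real.exp (-(R / (C * ρ)))))
      atTop (nhds (Real.log (B * R / (A + B * R)))) :=
    (Real.continuousAt_log hL.ne').tendsto.comp h1
  have hdiv := hlog.div_atTop Real.tendsto_log_atTop
  simpa using hdiv.neg
end
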